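/- For every n ≥ 2, δₙ(2n+1) = 9 + 2·δ_{n-1}(2n+1); that is, the number of occurrences of 2n+1 at level n equals 9 plus twice its number of occurrences at level n−1. -/

import Mathlib

open Matrix

/-- The three Farey matrices `A₀, A₁, A₂`. -/
def A : Fin 3 → Matrix (Fin 3) (Fin 3) ℤ :=
  ![!![1,0,1; 0,1,1; 0,0,1],
    !![0,0,1; 1,0,1; 0,1,1],
    !![0,1,1; 0,0,1; 1,0,1]]

/-- `Δ I = (v₁(I), v₂(I), v₃(I)) = (1,1,1)·A_{i₁}·⋯·A_{iₙ}`. -/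
def Δ (I : List (Fin 3)) : Fin 3 → ℤ :=
  Matrix.vecMul ![1,1,1] ((I.map A).prod)


lemma eta3 (w : Fin 3 → ℤ) : w = ![w 0, w 1, w 2] := by
  funext j; fin_cases j <;> rfl

lemma vecMul_A0 (w : Fin 3 → ℤ) :
    Matrix.vecMul w (A 0) = ![w 0, w 1, w 0 + w 1 + w 2] := by
  rw [eta3 w, show A 0 = !![1,0,1; 0,1,1; 0,0,1] from rfl]
  funext j; fin_cases j <;> (simp [Matrix.vecMul_cons]; try ring)

lemma vecMul_A1 (w : Fin 3 → ℤ) :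
    Matrix.vecMul w (A 1) = ![w 1, w 2, w 0 + w 1 + w 2] := by
  rw [eta3 w, show A 1 = !![0,0,1; 1,0,1; 0,1,1] from rfl]
  funext j; fin_cases j <;> (simp [Matrix.vecMul_cons]; try ring)

lemma vecMul_A2 (w : Fin 3 → ℤ) :
    Matrix.vecMul w (A 2) = ![w 2, w 0, w 0 + w 1 + w 2] := by
  rw [eta3 w, show A 2 = !![0,1,1; 0,0,1; 1,0,1] from rfl]
  funext j; fin_cases j <;> (simp [Matrix.vecMul_cons]; try ring)

lemma Δ_concat (I : List (Fin 3)) (i : Fin 3) :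
    Δ (I ++ [i]) = Matrix.vecMul (Δ I) (A i) := by
  simp [Δ, Matrix.vecMul_vecMul]

lemma Δ_snoc (p : ℕ) (g : Fin p → Fin 3) (i : Fin 3) :
    Δ (List.ofFn (Fin.snoc g i)) = Matrix.vecMul (Δ (List.ofFn g)) (A i) := by
  rw [List.ofFn_succ']
  simp only [Fin.snoc_castSucc, Fin.snoc_last, List.concat_eq_append]
  exact Δ_concat _ _

lemma v3_0 (a b c : ℤ) : (![a,b,c]) 0 = a := rfl
lemma v3_1 (a b c : ℤ) : (![a,b,c]) 1 = b := rfl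
lemma v3_2 (a b c : ℤ) : (![a,b,c]) 2 = c := rfl

lemma tri (x : Fin 3) : x = 0 ∨ x = 1 ∨ x = 2 := by omega

lemma cond_snoc (m : ℕ) (f : Fin (m+2) → Fin 3) :
    (∀ k : Fin (m+2), k ≠ 0 → f k = 0) ↔
      ((∀ k : Fin (m+1), k ≠ 0 → Fin.init f k = 0) ∧ f (Fin.last (m+1)) = 0) := by
  constructor
  · intro h
    refine ⟨fun k hk => ?_, h (Fin.last (m+1)) (by simp [Fin.ext_iff])⟩
    have hne : (Fin.castSucc k) ≠ (0 : Fin (m+2)) := by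
      exact Fin.castSucc_ne_zero_iff.mpr hk
    exact h k.castSucc hne
  · rintro ⟨h, hlast⟩ k hk
    induction k using Fin.lastCases with
    | last => exact hlast
    | cast k' =>
      have hk' : k' ≠ 0 := by
        intro hh; apply hk; rw [hh]; rfl
      exact h k' hk'

lemma key (m : ℕ) (f : Fin (m+1) → Fin 3) :
    (1 ≤ Δ (List.ofFn f) 0 ∧ 1 ≤ Δ (List.ofFn f) 1 ∧ (2*(m:ℤ)+3) ≤ Δ (List.ofFn f) 2) ∧
    (Δ (List.ofFn f) 0 + Δ (List.ofFn f) 1 + Δ (List.ofFn f) 2 = 2*(m:ℤ)+5 ↔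
      ∀ k : Fin (m+1), k ≠ 0 → f k = 0) ∧
    ((∀ k : Fin (m+1), k ≠ 0 → f k = 0) → Δ (List.ofFn f) = ![1, 1, 2*(m:ℤ)+3]) := by
  induction m with
  | zero =>
    have hof : List.ofFn f = [f 0] := by simp [List.ofFn_succ]
    have h2 : Δ (List.ofFn f) = Matrix.vecMul ![1,1,1] (A (f 0)) := by simp [hof, Δ]
    have hcond : ∀ k : Fin 1, k ≠ 0 → f k = 0 := fun k hk =>
      absurd (Subsingleton.elim k 0) hk
    obtain ⟨x, hx⟩ : ∃ x, f 0 = x := ⟨_, rfl⟩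
    rw [hx] at h2
    have h3 : Δ (List.ofFn f) = ![1, 1, 3] := by
      rcases tri x with rfl | rfl | rfl <;>
        rw [h2] <;>
        first
        | (rw [vecMul_A0]; norm_num [v3_0, v3_1, v3_2])
        | (rw [vecMul_A1]; norm_num [v3_0, v3_1, v3_2])
        | (rw [vecMul_A2]; norm_num [v3_0, v3_1, v3_2])
    rw [h3]
    refine ⟨⟨by rw [v3_0], by rw [v3_1], by rw [v3_2]; norm_num⟩,
      iff_of_true (by rw [v3_0, v3_1, v3_2]; norm_num) hcond,
      fun _ => by norm_num⟩
  | succ m ih =>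
    obtain ⟨i, hi⟩ : ∃ x, f (Fin.last (m+1)) = x := ⟨_, rfl⟩
    have hΔ : Δ (List.ofFn f) = Matrix.vecMul (Δ (List.ofFn (Fin.init f))) (A i) := by
      rw [← hi, ← Δ_snoc, Fin.snoc_init_self]
    obtain ⟨⟨h0, h1, h2⟩, hiff, heq⟩ := ih (Fin.init f)
    set w := Δ (List.ofFn (Fin.init f)) with hwdef
    have hcond := cond_snoc m f
    rw [hi] at hcond
    rcases tri i with rfl | rfl | rfl
    · -- i = 0
      rw [vecMul_A0 w] at hΔ
      rw [hΔ, v3_0, v3_1, v3_2]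
      push_cast
      refine ⟨⟨h0, h1, by linarith⟩, ?_, ?_⟩
      · rw [hcond]
        constructor
        · intro hsum
          have hw2 : w 0 + w 1 + w 2 = 2*(m:ℤ)+5 := by linarith
          refine ⟨hiff.mp hw2, rfl⟩
        · rintro ⟨hg, -⟩
          have hwe := heq hg
          rw [hwe, v3_0, v3_1, v3_2]
          ring
      · intro hf
        obtain ⟨hg, -⟩ := hcond.mp hf
        have hwe := heq hg
        rw [hwe, v3_0, v3_1, v3_2]
        funext j
        rcases tri j with rfl | rfl | rfl <;>
          simp only [v3_0, v3_1, v3_2] <;> push_cast <;> ring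
    · -- i = 1
      rw [vecMul_A1 w] at hΔ
      rw [hΔ, v3_0, v3_1, v3_2]
      push_cast
      refine ⟨⟨h1, by linarith, by linarith⟩, ?_, ?_⟩
      · rw [hcond]
        constructor
        · intro hsum; exfalso; linarith
        · rintro ⟨-, hbad⟩; exact absurd hbad (by decide)
      · intro hf
        exact absurd (hcond.mp hf).2 (by decide)
    · -- i = 2
      rw [vecMul_A2 w] at hΔ
      rw [hΔ, v3_0, v3_1, v3_2]
      push_cast
      refine ⟨⟨by linarith, h0, by linarith⟩, ?_, ?_⟩
      · rw [hcond]
        constructor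
        · intro hsum; exfalso; linarith
        · rintro ⟨-, hbad⟩; exact absurd hbad (by decide)
      · intro hf
        exact absurd (hcond.mp hf).2 (by decide)


/-- `δ n j m` : the number of tuples `I ∈ {0,1,2}ⁿ` with `v_{j+1}(I) = m`. -/
def δ (n : ℕ) (j : Fin 3) (m : ℤ) : ℕ :=
  (Finset.univ.filter (fun f : Fin n → Fin 3 => Δ (List.ofFn f) j = m)).card

/-- `δtot n m` : the number of occurrences of `m` at level `n`. -/
def δtot (n : ℕ) (m : ℤ) : ℕ := δ n 0 m + δ n 1 m + δ n 2 m


lemma count3 (p : ℕ) :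
    (Finset.univ.filter (fun g : Fin (p+1) → Fin 3 =>
      Δ (List.ofFn g) 0 + Δ (List.ofFn g) 1 + Δ (List.ofFn g) 2 = 2*(p:ℤ)+5)).card = 3 := by
  have himg : (Finset.univ.filter (fun g : Fin (p+1) → Fin 3 =>
      Δ (List.ofFn g) 0 + Δ (List.ofFn g) 1 + Δ (List.ofFn g) 2 = 2*(p:ℤ)+5)) =
      Finset.image (fun j : Fin 3 => (fun k => if k = 0 then j else 0 : Fin (p+1) → Fin 3))
        Finset.univ := by
    ext f
    simp only [Finset.mem_filter, Finset.mem_univ, true_and, Finset.mem_image]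
    rw [(key p f).2.1]
    constructor
    · intro h
      refine ⟨f 0, funext fun k => ?_⟩
      by_cases hk : k = 0
      · subst hk; simp
      · simp [hk, h k hk]
    · rintro ⟨j, rfl⟩ k hk
      simp [hk]
  rw [himg, Finset.card_image_of_injective _ (fun j j' hjj => by
    simpa using congrFun hjj 0), Finset.card_univ, Fintype.card_fin]

def snocEquiv (p : ℕ) : ((Fin p → Fin 3) × Fin 3) ≃ (Fin (p+1) → Fin 3) where
  toFun x := Fin.snoc x.1 x.2
  invFun f := (Fin.init f, f (Fin.last p))
  left_inv x := by simp
  right_inv f := by simp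

lemma delta_succ (p : ℕ) (j : Fin 3) (m : ℤ) :
    δ (p+1) j m = ∑ g : Fin p → Fin 3, ∑ i : Fin 3,
      (if Matrix.vecMul (Δ (List.ofFn g)) (A i) j = m then 1 else 0) := by
  rw [δ, Finset.card_filter]
  have h := Fintype.sum_equiv (snocEquiv p)
    (fun x : (Fin p → Fin 3) × Fin 3 =>
      if Matrix.vecMul (Δ (List.ofFn x.1)) (A x.2) j = m then (1:ℕ) else 0)
    (fun f => if Δ (List.ofFn f) j = m then 1 else 0)
    (fun x => by simp only [snocEquiv, Equiv.coe_fn_mk, Δ_snoc])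
  rw [← h, Fintype.sum_prod_type]

lemma delta_level (p : ℕ) (j : Fin 3) (m : ℤ) :
    δ p j m = ∑ g : Fin p → Fin 3, (if Δ (List.ofFn g) j = m then 1 else 0) := by
  rw [δ, Finset.card_filter]

theorem stmt10 (n : ℕ) (hn : 2 ≤ n) :
    δtot n (2 * (n : ℤ) + 1) = 9 + 2 * δtot (n - 1) (2 * (n : ℤ) + 1) := by
  obtain ⟨k, rfl⟩ : ∃ k, n = k + 2 := ⟨n - 2, by omega⟩
  have hm : (2 * ((k+2 : ℕ) : ℤ) + 1) = 2*(k:ℤ)+5 := by push_cast; ring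
  have hn1 : (k + 2) - 1 = k + 1 := rfl
  rw [hm, hn1]
  set m := 2*(k:ℤ)+5 with hmdef
  have e0 : δ (k+2) 0 m = δtot (k+1) m := by
    rw [show k+2 = (k+1)+1 from rfl, delta_succ (k+1) 0 m]
    rw [Finset.sum_congr rfl (fun g _ => by
      rw [Fin.sum_univ_three, vecMul_A0, vecMul_A1, vecMul_A2, v3_0, v3_0, v3_0])]
    rw [δtot, delta_level, delta_level, delta_level, ← Finset.sum_add_distrib,
      ← Finset.sum_add_distrib]
  have e1 : δ (k+2) 1 m = δtot (k+1) m := by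
    rw [show k+2 = (k+1)+1 from rfl, delta_succ (k+1) 1 m]
    rw [Finset.sum_congr rfl (fun g _ => by
      rw [Fin.sum_univ_three, vecMul_A0, vecMul_A1, vecMul_A2, v3_1, v3_1, v3_1])]
    rw [δtot, delta_level, delta_level, delta_level, ← Finset.sum_add_distrib,
      ← Finset.sum_add_distrib]
    exact Finset.sum_congr rfl (fun g _ => by ring)
  have e2 : δ (k+2) 2 m = 9 := by
    rw [show k+2 = (k+1)+1 from rfl, delta_succ (k+1) 2 m]
    have inner : ∀ g : Fin (k+1) → Fin 3,
        (∑ i : Fin 3, if (Matrix.vecMul (Δ (List.ofFn g)) (A i)) 2 = m then (1:ℕ) else 0) =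
        3 * (if Δ (List.ofFn g) 0 + Δ (List.ofFn g) 1 + Δ (List.ofFn g) 2 = m then 1 else 0) := by
      intro g
      rw [Fin.sum_univ_three, vecMul_A0, vecMul_A1, vecMul_A2, v3_2, v3_2, v3_2]
      ring
    rw [Finset.sum_congr rfl (fun g _ => inner g), ← Finset.mul_sum, ← Finset.card_filter,
      hmdef, count3 k]
    norm_num
  rw [show δtot (k+2) m = δ (k+2) 0 m + δ (k+2) 1 m + δ (k+2) 2 m from rfl, e0, e1, e2]
  ring
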